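/- Each of the three maps K₁, K₂, K₃ is a bounded smooth map from ℝ² to ℝ³ that solves the linearized H-system at the degree-2 bubble: L_W[K] = ΔK − 2 W_x ∧ K_y − 2 K_x ∧ W_y = 0 at every point of ℝ². -/

import Mathlib

noncomputable section

/-- `ℝ³` with the Euclidean norm. -/
abbrev R3 : Type := EuclideanSpace ℝ (Fin 3)

/-- The vector in `ℝ³` with the given coordinates. -/
def e3 (a b c : ℝ) : R3 := (WithLp.equiv 2 (Fin 3 → ℝ)).symm ![a, b, c]

/-- The cross product on `ℝ³`. -/
def cross (a b : R3) : R3 :=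
  e3 (a 1 * b 2 - a 2 * b 1) (a 2 * b 0 - a 0 * b 2) (a 0 * b 1 - a 1 * b 0)

/-- Partial derivative in the `x` direction, identifying `ℝ²` with `ℂ` via `z = x + iy`. -/
def pdx (u : ℂ → R3) (z : ℂ) : R3 := fderiv ℝ u z 1

/-- Partial derivative in the `y` direction. -/
def pdy (u : ℂ → R3) (z : ℂ) : R3 := fderiv ℝ u z Complex.I

/-- Componentwise Laplacian. -/
def lap (u : ℂ → R3) (z : ℂ) : R3 := pdx (pdx u) z + pdy (pdy u) z

/-- The degree-2 H-bubble `W = π(z²)`. -/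
def W : ℂ → R3 := fun z =>
  e3 (2 * (z.re ^ 2 - z.im ^ 2) / ((z.re ^ 2 + z.im ^ 2) ^ 2 + 1))
    (4 * z.re * z.im / ((z.re ^ 2 + z.im ^ 2) ^ 2 + 1))
    (((z.re ^ 2 + z.im ^ 2) ^ 2 - 1) / ((z.re ^ 2 + z.im ^ 2) ^ 2 + 1))

/-- The linearized H-system operator at the degree-2 bubble `W`:
`L_W[v] = Δv − 2 Wₓ ∧ v_y − 2 vₓ ∧ W_y`. -/
def LW (v : ℂ → R3) (z : ℂ) : R3 :=
  lap v z - (2 : ℝ) • cross (pdx W z) (pdy v z) - (2 : ℝ) • cross (pdx v z) (pdy W z)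

/-- `v` is a bounded smooth global solution of the linearized H-system at `W`. -/
def IsBoundedSmoothKernel (v : ℂ → R3) : Prop :=
  (∃ C : ℝ, ∀ z, ‖v z‖ ≤ C) ∧ ContDiff ℝ (⊤ : ℕ∞) v ∧ ∀ z, LW v z = 0


def K1 : ℂ → R3 := fun z =>
  let x := z.re; let y := z.im; let D := (x ^ 2 + y ^ 2) ^ 2 + 1
  e3 (2 * (x ^ 2 - y ^ 2) * ((x ^ 2 + y ^ 2) ^ 2 - 1) / D ^ 2)
    (4 * x * y * ((x ^ 2 + y ^ 2) ^ 2 - 1) / D ^ 2)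
    (((x ^ 2 + y ^ 2) ^ 2 - 1) ^ 2 / D ^ 2)

def K2 : ℂ → R3 := fun z =>
  let x := z.re; let y := z.im; let D := (x ^ 2 + y ^ 2) ^ 2 + 1
  e3 (2 * (x ^ 2 - y ^ 2) ^ 2 / D ^ 2)
    (4 * x * y * (x ^ 2 - y ^ 2) / D ^ 2)
    ((x ^ 2 - y ^ 2) * ((x ^ 2 + y ^ 2) ^ 2 - 1) / D ^ 2)

def K3 : ℂ → R3 := fun z =>
  let x := z.re; let y := z.im; let D := (x ^ 2 + y ^ 2) ^ 2 + 1
  e3 (4 * x * y * (x ^ 2 - y ^ 2) / D ^ 2)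
    (8 * x ^ 2 * y ^ 2 / D ^ 2)
    (2 * x * y * ((x ^ 2 + y ^ 2) ^ 2 - 1) / D ^ 2)


open Complex ContinuousLinearMap

def FD (p q : ℝ) : ℂ →L[ℝ] ℝ := p • reCLM + q • imCLM

@[simp] lemma FD_apply (p q : ℝ) (w : ℂ) : FD p q w = p * w.re + q * w.im := by
  simp [FD]

lemma FD_ext {p q r s : ℝ} (h1 : p = r) (h2 : q = s) : FD p q = FD r s := by rw [h1, h2]

lemma hasFD_mono (c : ℝ) (k l : ℕ) (z : ℂ) :
    HasFDerivAt (fun z : ℂ => c * z.re ^ k * z.im ^ l)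
      (FD (c * k * z.re ^ (k-1) * z.im ^ l) (c * l * z.re ^ k * z.im ^ (l-1))) z := by
  have hx : HasFDerivAt (fun z : ℂ => z.re ^ k) ((k * z.re ^ (k-1) : ℝ) • reCLM) z :=
    (hasDerivAt_pow k z.re).comp_hasFDerivAt z reCLM.hasFDerivAt
  have hy : HasFDerivAt (fun z : ℂ => z.im ^ l) ((l * z.im ^ (l-1) : ℝ) • imCLM) z :=
    (hasDerivAt_pow l z.im).comp_hasFDerivAt z imCLM.hasFDerivAt
  refine ((hx.const_mul c).mul hy).congr_fderiv (ContinuousLinearMap.ext fun w => ?_)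
  simp [FD]
  ring

lemma fd_add {f g : ℂ → ℝ} {p q r s : ℝ} {z : ℂ} (hf : HasFDerivAt f (FD p q) z)
    (hg : HasFDerivAt g (FD r s) z) :
    HasFDerivAt (fun z => f z + g z) (FD (p + r) (q + s)) z := by
  refine (hf.add hg).congr_fderiv (ContinuousLinearMap.ext fun w => ?_)
  simp [FD]; ring

lemma fd_div {f g : ℂ → ℝ} {p q r s : ℝ} {z : ℂ} (hf : HasFDerivAt f (FD p q) z)
    (hg : HasFDerivAt g (FD r s) z) (h0 : g z ≠ 0) :
    HasFDerivAt (fun z => f z / g z)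
      (FD ((p * g z - f z * r) / g z ^ 2) ((q * g z - f z * s) / g z ^ 2)) z := by
  have hi : HasFDerivAt (fun z => (g z)⁻¹) ((-((g z) ^ 2)⁻¹) • (FD r s)) z :=
    (hasDerivAt_inv h0).comp_hasFDerivAt z hg
  have hm := hf.mul hi
  have : HasFDerivAt (fun z => f z / g z)
      (f z • (-((g z) ^ 2)⁻¹ • FD r s) + (g z)⁻¹ • FD p q) z := by
    simp only [div_eq_mul_inv]; exact hm
  refine this.congr_fderiv (ContinuousLinearMap.ext fun w => ?_)
  simp [FD]
  field_simp
  ring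

lemma fd_pow {f : ℂ → ℝ} {p q : ℝ} {z : ℂ} (hf : HasFDerivAt f (FD p q) z) (k : ℕ) :
    HasFDerivAt (fun z => f z ^ k) (FD (k * f z ^ (k-1) * p) (k * f z ^ (k-1) * q)) z := by
  refine ((hasDerivAt_pow k (f z)).comp_hasFDerivAt z hf).congr_fderiv
    (ContinuousLinearMap.ext fun w => ?_)
  simp [FD]; ring

lemma fd_cmul {f : ℂ → ℝ} {p q : ℝ} {z : ℂ} (hf : HasFDerivAt f (FD p q) z) (c : ℝ) :
    HasFDerivAt (fun z => c * f z) (FD (c * p) (c * q)) z := by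
  refine (hf.const_mul c).congr_fderiv (ContinuousLinearMap.ext fun w => ?_)
  simp [FD]; ring

@[simp] lemma e3_app0 (a b c : ℝ) : e3 a b c 0 = a := rfl
@[simp] lemma e3_app1 (a b c : ℝ) : e3 a b c 1 = b := rfl
@[simp] lemma e3_app2 (a b c : ℝ) : e3 a b c 2 = c := rfl

lemma R3_ext {v w : R3} (h0 : v 0 = w 0) (h1 : v 1 = w 1) (h2 : v 2 = w 2) : v = w := by
  refine PiLp.ext fun i => ?_
  fin_cases i <;> assumption

@[simp] lemma R3_add_apply (v w : R3) (i : Fin 3) : (v + w) i = v i + w i := rfl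
@[simp] lemma R3_smul_apply (r : ℝ) (v : R3) (i : Fin 3) : (r • v) i = r * v i := rfl
@[simp] lemma R3_sub_apply (v w : R3) (i : Fin 3) : (v - w) i = v i - w i := rfl
@[simp] lemma R3_zero_apply (i : Fin 3) : (0 : R3) i = 0 := rfl

def FD3 (P Q : R3) : ℂ →L[ℝ] R3 := reCLM.smulRight P + imCLM.smulRight Q
@[simp] lemma FD3_apply (P Q : R3) (w : ℂ) : FD3 P Q w = w.re • P + w.im • Q := by
  simp [FD3]

@[simp] lemma FD3_one (P Q : R3) : FD3 P Q 1 = P := by simp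
@[simp] lemma FD3_I (P Q : R3) : FD3 P Q Complex.I = Q := by simp

lemma e3_decomp (a b c : ℝ) : e3 a b c = a • e3 1 0 0 + b • e3 0 1 0 + c • e3 0 0 1 := by
  refine R3_ext ?_ ?_ ?_ <;> simp

lemma fd3_e3 {f g h : ℂ → ℝ} {p1 q1 p2 q2 p3 q3 : ℝ} {z : ℂ}
    (hf : HasFDerivAt f (FD p1 q1) z) (hg : HasFDerivAt g (FD p2 q2) z)
    (hh : HasFDerivAt h (FD p3 q3) z) :
    HasFDerivAt (fun z => e3 (f z) (g z) (h z)) (FD3 (e3 p1 p2 p3) (e3 q1 q2 q3)) z := by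
  have h1 := ((hf.smul_const (e3 1 0 0)).add (hg.smul_const (e3 0 1 0))).add
    (hh.smul_const (e3 0 0 1))
  have heq : (fun z => e3 (f z) (g z) (h z)) =
      fun z => f z • e3 1 0 0 + g z • e3 0 1 0 + h z • e3 0 0 1 :=
    funext fun z => e3_decomp _ _ _
  rw [heq]
  refine h1.congr_fderiv (ContinuousLinearMap.ext fun w => ?_)
  refine R3_ext ?_ ?_ ?_ <;> simp <;> ring

lemma fd3_smul {φ : ℂ → ℝ} {u : ℂ → R3} {p q : ℝ} {P Q : R3} {z : ℂ}
    (hφ : HasFDerivAt φ (FD p q) z) (hu : HasFDerivAt u (FD3 P Q) z) :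
    HasFDerivAt (fun z => φ z • u z) (FD3 (p • u z + φ z • P) (q • u z + φ z • Q)) z := by
  refine (hφ.smul hu).congr_fderiv (ContinuousLinearMap.ext fun w => ?_)
  refine R3_ext ?_ ?_ ?_ <;> simp <;> ring

lemma fd3_add {u v : ℂ → R3} {P Q R S : R3} {z : ℂ}
    (hu : HasFDerivAt u (FD3 P Q) z) (hv : HasFDerivAt v (FD3 R S) z) :
    HasFDerivAt (fun z => u z + v z) (FD3 (P + R) (Q + S)) z := by
  refine (hu.add hv).congr_fderiv (ContinuousLinearMap.ext fun w => ?_)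
  refine R3_ext ?_ ?_ ?_ <;> simp <;> ring

def dp : ℂ → ℝ := fun z => 1 * z.re ^ 4 * z.im ^ 0 + 2 * z.re ^ 2 * z.im ^ 2 + 1 * z.re ^ 0 * z.im ^ 4 + 1 * z.re ^ 0 * z.im ^ 0
def dpx : ℂ → ℝ := fun z => 4 * z.re ^ 3 * z.im ^ 0 + 4 * z.re ^ 1 * z.im ^ 2
def dpy : ℂ → ℝ := fun z => 4 * z.re ^ 2 * z.im ^ 1 + 4 * z.re ^ 0 * z.im ^ 3

lemma dp_pos (z : ℂ) : 0 < dp z := by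
  have h : dp z = (z.re ^ 2 + z.im ^ 2) ^ 2 + 1 := by simp only [dp]; ring
  rw [h]; positivity

lemma dp_ne (z : ℂ) : dp z ≠ 0 := ne_of_gt (dp_pos z)

lemma hdp (z : ℂ) : HasFDerivAt dp (FD (dpx z) (dpy z)) z := by
  have hn := (fd_add (fd_add (fd_add (hasFD_mono 1 4 0 z) (hasFD_mono 2 2 2 z)) (hasFD_mono 1 0 4 z)) (hasFD_mono 1 0 0 z))
  exact hn.congr_fderiv (FD_ext (by simp only [dpx]; push_cast; ring)
    (by simp only [dpy]; push_cast; ring))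

def Wa : ℂ → ℝ := fun z => (2 * z.re ^ 2 * z.im ^ 0 + (-2) * z.re ^ 0 * z.im ^ 2) / dp z
def Wb : ℂ → ℝ := fun z => (4 * z.re ^ 1 * z.im ^ 1) / dp z
def Wc : ℂ → ℝ := fun z => (1 * z.re ^ 4 * z.im ^ 0 + 2 * z.re ^ 2 * z.im ^ 2 + 1 * z.re ^ 0 * z.im ^ 4 + (-1) * z.re ^ 0 * z.im ^ 0) / dp z
def Wax : ℂ → ℝ := fun z => ((-4) * z.re ^ 5 * z.im ^ 0 + 8 * z.re ^ 3 * z.im ^ 2 + 12 * z.re ^ 1 * z.im ^ 4 + 4 * z.re ^ 1 * z.im ^ 0) / dp z ^ 2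
def Way : ℂ → ℝ := fun z => ((-12) * z.re ^ 4 * z.im ^ 1 + (-8) * z.re ^ 2 * z.im ^ 3 + 4 * z.re ^ 0 * z.im ^ 5 + (-4) * z.re ^ 0 * z.im ^ 1) / dp z ^ 2
def Wbx : ℂ → ℝ := fun z => ((-12) * z.re ^ 4 * z.im ^ 1 + (-8) * z.re ^ 2 * z.im ^ 3 + 4 * z.re ^ 0 * z.im ^ 5 + 4 * z.re ^ 0 * z.im ^ 1) / dp z ^ 2
def Wby : ℂ → ℝ := fun z => (4 * z.re ^ 5 * z.im ^ 0 + (-8) * z.re ^ 3 * z.im ^ 2 + (-12) * z.re ^ 1 * z.im ^ 4 + 4 * z.re ^ 1 * z.im ^ 0) / dp z ^ 2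
def Wcx : ℂ → ℝ := fun z => (8 * z.re ^ 3 * z.im ^ 0 + 8 * z.re ^ 1 * z.im ^ 2) / dp z ^ 2
def Wcy : ℂ → ℝ := fun z => (8 * z.re ^ 2 * z.im ^ 1 + 8 * z.re ^ 0 * z.im ^ 3) / dp z ^ 2
def Waxx : ℂ → ℝ := fun z => (12 * z.re ^ 8 * z.im ^ 0 + (-48) * z.re ^ 6 * z.im ^ 2 + (-120) * z.re ^ 4 * z.im ^ 4 + (-48) * z.re ^ 2 * z.im ^ 6 + 12 * z.re ^ 0 * z.im ^ 8 + (-48) * z.re ^ 4 * z.im ^ 0 + 16 * z.re ^ 0 * z.im ^ 4 + 4 * z.re ^ 0 * z.im ^ 0) / dp z ^ 3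
def Waxy : ℂ → ℝ := fun z => (48 * z.re ^ 7 * z.im ^ 1 + 48 * z.re ^ 5 * z.im ^ 3 + (-48) * z.re ^ 3 * z.im ^ 5 + (-48) * z.re ^ 1 * z.im ^ 7 + (-16) * z.re ^ 3 * z.im ^ 1 + 16 * z.re ^ 1 * z.im ^ 3) / dp z ^ 3
def Wayy : ℂ → ℝ := fun z => ((-12) * z.re ^ 8 * z.im ^ 0 + 48 * z.re ^ 6 * z.im ^ 2 + 120 * z.re ^ 4 * z.im ^ 4 + 48 * z.re ^ 2 * z.im ^ 6 + (-12) * z.re ^ 0 * z.im ^ 8 + (-16) * z.re ^ 4 * z.im ^ 0 + 48 * z.re ^ 0 * z.im ^ 4 + (-4) * z.re ^ 0 * z.im ^ 0) / dp z ^ 3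
def Wbxx : ℂ → ℝ := fun z => (48 * z.re ^ 7 * z.im ^ 1 + 48 * z.re ^ 5 * z.im ^ 3 + (-48) * z.re ^ 3 * z.im ^ 5 + (-48) * z.re ^ 1 * z.im ^ 7 + (-80) * z.re ^ 3 * z.im ^ 1 + (-48) * z.re ^ 1 * z.im ^ 3) / dp z ^ 3
def Wbxy : ℂ → ℝ := fun z => ((-12) * z.re ^ 8 * z.im ^ 0 + 48 * z.re ^ 6 * z.im ^ 2 + 120 * z.re ^ 4 * z.im ^ 4 + 48 * z.re ^ 2 * z.im ^ 6 + (-12) * z.re ^ 0 * z.im ^ 8 + (-8) * z.re ^ 4 * z.im ^ 0 + (-48) * z.re ^ 2 * z.im ^ 2 + (-8) * z.re ^ 0 * z.im ^ 4 + 4 * z.re ^ 0 * z.im ^ 0) / dp z ^ 3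
def Wbyy : ℂ → ℝ := fun z => ((-48) * z.re ^ 7 * z.im ^ 1 + (-48) * z.re ^ 5 * z.im ^ 3 + 48 * z.re ^ 3 * z.im ^ 5 + 48 * z.re ^ 1 * z.im ^ 7 + (-48) * z.re ^ 3 * z.im ^ 1 + (-80) * z.re ^ 1 * z.im ^ 3) / dp z ^ 3
def Wcxx : ℂ → ℝ := fun z => ((-40) * z.re ^ 6 * z.im ^ 0 + (-72) * z.re ^ 4 * z.im ^ 2 + (-24) * z.re ^ 2 * z.im ^ 4 + 8 * z.re ^ 0 * z.im ^ 6 + 24 * z.re ^ 2 * z.im ^ 0 + 8 * z.re ^ 0 * z.im ^ 2) / dp z ^ 3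
def Wcxy : ℂ → ℝ := fun z => ((-48) * z.re ^ 5 * z.im ^ 1 + (-96) * z.re ^ 3 * z.im ^ 3 + (-48) * z.re ^ 1 * z.im ^ 5 + 16 * z.re ^ 1 * z.im ^ 1) / dp z ^ 3
def Wcyy : ℂ → ℝ := fun z => (8 * z.re ^ 6 * z.im ^ 0 + (-24) * z.re ^ 4 * z.im ^ 2 + (-72) * z.re ^ 2 * z.im ^ 4 + (-40) * z.re ^ 0 * z.im ^ 6 + 8 * z.re ^ 2 * z.im ^ 0 + 24 * z.re ^ 0 * z.im ^ 2) / dp z ^ 3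

lemma hWa (z : ℂ) : HasFDerivAt Wa (FD (Wax z) (Way z)) z := by
  have hn := (fd_add (hasFD_mono 2 2 0 z) (hasFD_mono (-2) 0 2 z))
  exact (fd_div hn (hdp z) (dp_ne z)).congr_fderiv (FD_ext
    (by have hd := dp_ne z; simp only [dp] at hd
        simp only [Wax, dp, dpx, dpy]; push_cast; field_simp [hd]; ring)
    (by have hd := dp_ne z; simp only [dp] at hd
        simp only [Way, dp, dpx, dpy]; push_cast; field_simp [hd]; ring))


lemma hWb (z : ℂ) : HasFDerivAt Wb (FD (Wbx z) (Wby z)) z := by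
  have hn := (hasFD_mono 4 1 1 z)
  exact (fd_div hn (hdp z) (dp_ne z)).congr_fderiv (FD_ext
    (by have hd := dp_ne z; simp only [dp] at hd
        simp only [Wbx, dp, dpx, dpy]; push_cast; field_simp [hd]; ring)
    (by have hd := dp_ne z; simp only [dp] at hd
        simp only [Wby, dp, dpx, dpy]; push_cast; field_simp [hd]; ring))


lemma hWc (z : ℂ) : HasFDerivAt Wc (FD (Wcx z) (Wcy z)) z := by
  have hn := (fd_add (fd_add (fd_add (hasFD_mono 1 4 0 z) (hasFD_mono 2 2 2 z)) (hasFD_mono 1 0 4 z)) (hasFD_mono (-1) 0 0 z))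
  exact (fd_div hn (hdp z) (dp_ne z)).congr_fderiv (FD_ext
    (by have hd := dp_ne z; simp only [dp] at hd
        simp only [Wcx, dp, dpx, dpy]; push_cast; field_simp [hd]; ring)
    (by have hd := dp_ne z; simp only [dp] at hd
        simp only [Wcy, dp, dpx, dpy]; push_cast; field_simp [hd]; ring))


lemma hWax (z : ℂ) : HasFDerivAt Wax (FD (Waxx z) (Waxy z)) z := by
  have hn := (fd_add (fd_add (fd_add (hasFD_mono (-4) 5 0 z) (hasFD_mono 8 3 2 z)) (hasFD_mono 12 1 4 z)) (hasFD_mono 4 1 0 z))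
  exact (fd_div hn (fd_pow (hdp z) 2) (pow_ne_zero 2 (dp_ne z))).congr_fderiv (FD_ext
    (by have hd := dp_ne z; simp only [dp] at hd
        simp only [Waxx, dp, dpx, dpy]; push_cast; field_simp [hd]; ring)
    (by have hd := dp_ne z; simp only [dp] at hd
        simp only [Waxy, dp, dpx, dpy]; push_cast; field_simp [hd]; ring))


lemma hWay (z : ℂ) : HasFDerivAt Way (FD (Waxy z) (Wayy z)) z := by
  have hn := (fd_add (fd_add (fd_add (hasFD_mono (-12) 4 1 z) (hasFD_mono (-8) 2 3 z)) (hasFD_mono 4 0 5 z)) (hasFD_mono (-4) 0 1 z))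
  exact (fd_div hn (fd_pow (hdp z) 2) (pow_ne_zero 2 (dp_ne z))).congr_fderiv (FD_ext
    (by have hd := dp_ne z; simp only [dp] at hd
        simp only [Waxy, dp, dpx, dpy]; push_cast; field_simp [hd]; ring)
    (by have hd := dp_ne z; simp only [dp] at hd
        simp only [Wayy, dp, dpx, dpy]; push_cast; field_simp [hd]; ring))


lemma hWbx (z : ℂ) : HasFDerivAt Wbx (FD (Wbxx z) (Wbxy z)) z := by
  have hn := (fd_add (fd_add (fd_add (hasFD_mono (-12) 4 1 z) (hasFD_mono (-8) 2 3 z)) (hasFD_mono 4 0 5 z)) (hasFD_mono 4 0 1 z))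
  exact (fd_div hn (fd_pow (hdp z) 2) (pow_ne_zero 2 (dp_ne z))).congr_fderiv (FD_ext
    (by have hd := dp_ne z; simp only [dp] at hd
        simp only [Wbxx, dp, dpx, dpy]; push_cast; field_simp [hd]; ring)
    (by have hd := dp_ne z; simp only [dp] at hd
        simp only [Wbxy, dp, dpx, dpy]; push_cast; field_simp [hd]; ring))


lemma hWby (z : ℂ) : HasFDerivAt Wby (FD (Wbxy z) (Wbyy z)) z := by
  have hn := (fd_add (fd_add (fd_add (hasFD_mono 4 5 0 z) (hasFD_mono (-8) 3 2 z)) (hasFD_mono (-12) 1 4 z)) (hasFD_mono 4 1 0 z))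
  exact (fd_div hn (fd_pow (hdp z) 2) (pow_ne_zero 2 (dp_ne z))).congr_fderiv (FD_ext
    (by have hd := dp_ne z; simp only [dp] at hd
        simp only [Wbxy, dp, dpx, dpy]; push_cast; field_simp [hd]; ring)
    (by have hd := dp_ne z; simp only [dp] at hd
        simp only [Wbyy, dp, dpx, dpy]; push_cast; field_simp [hd]; ring))


lemma hWcx (z : ℂ) : HasFDerivAt Wcx (FD (Wcxx z) (Wcxy z)) z := by
  have hn := (fd_add (hasFD_mono 8 3 0 z) (hasFD_mono 8 1 2 z))
  exact (fd_div hn (fd_pow (hdp z) 2) (pow_ne_zero 2 (dp_ne z))).congr_fderiv (FD_ext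
    (by have hd := dp_ne z; simp only [dp] at hd
        simp only [Wcxx, dp, dpx, dpy]; push_cast; field_simp [hd]; ring)
    (by have hd := dp_ne z; simp only [dp] at hd
        simp only [Wcxy, dp, dpx, dpy]; push_cast; field_simp [hd]; ring))


lemma hWcy (z : ℂ) : HasFDerivAt Wcy (FD (Wcxy z) (Wcyy z)) z := by
  have hn := (fd_add (hasFD_mono 8 2 1 z) (hasFD_mono 8 0 3 z))
  exact (fd_div hn (fd_pow (hdp z) 2) (pow_ne_zero 2 (dp_ne z))).congr_fderiv (FD_ext
    (by have hd := dp_ne z; simp only [dp] at hd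
        simp only [Wcxy, dp, dpx, dpy]; push_cast; field_simp [hd]; ring)
    (by have hd := dp_ne z; simp only [dp] at hd
        simp only [Wcyy, dp, dpx, dpy]; push_cast; field_simp [hd]; ring))


def q2 : ℂ → ℝ := fun z => 1 / 2 * Wa z
def q2x : ℂ → ℝ := fun z => 1 / 2 * Wax z
def q2y : ℂ → ℝ := fun z => 1 / 2 * Way z
def q2xx : ℂ → ℝ := fun z => 1 / 2 * Waxx z
def q2xy : ℂ → ℝ := fun z => 1 / 2 * Waxy z
def q2yy : ℂ → ℝ := fun z => 1 / 2 * Wayy z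

lemma hq2 (z : ℂ) : HasFDerivAt q2 (FD (q2x z) (q2y z)) z := fd_cmul (hWa z) (1 / 2)
lemma hq2x (z : ℂ) : HasFDerivAt q2x (FD (q2xx z) (q2xy z)) z := fd_cmul (hWax z) (1 / 2)
lemma hq2y (z : ℂ) : HasFDerivAt q2y (FD (q2xy z) (q2yy z)) z := fd_cmul (hWay z) (1 / 2)

def q3 : ℂ → ℝ := fun z => 1 / 2 * Wb z
def q3x : ℂ → ℝ := fun z => 1 / 2 * Wbx z
def q3y : ℂ → ℝ := fun z => 1 / 2 * Wby z
def q3xx : ℂ → ℝ := fun z => 1 / 2 * Wbxx z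
def q3xy : ℂ → ℝ := fun z => 1 / 2 * Wbxy z
def q3yy : ℂ → ℝ := fun z => 1 / 2 * Wbyy z

lemma hq3 (z : ℂ) : HasFDerivAt q3 (FD (q3x z) (q3y z)) z := fd_cmul (hWb z) (1 / 2)
lemma hq3x (z : ℂ) : HasFDerivAt q3x (FD (q3xx z) (q3xy z)) z := fd_cmul (hWbx z) (1 / 2)
lemma hq3y (z : ℂ) : HasFDerivAt q3y (FD (q3xy z) (q3yy z)) z := fd_cmul (hWby z) (1 / 2)


def Wv : ℂ → R3 := fun z => e3 (Wa z) (Wb z) (Wc z)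

lemma hWv (z : ℂ) : HasFDerivAt Wv
    (FD3 (e3 (Wax z) (Wbx z) (Wcx z)) (e3 (Way z) (Wby z) (Wcy z))) z :=
  fd3_e3 (hWa z) (hWb z) (hWc z)

lemma W_eq : W = Wv := by
  funext z
  have hdd : ((z.re ^ 2 + z.im ^ 2) ^ 2 + 1 : ℝ) = dp z := by simp only [dp]; ring
  refine R3_ext ?_ ?_ ?_ <;>
    simp only [W, Wv, Wa, Wb, Wc, e3_app0, e3_app1, e3_app2] <;>
    rw [hdd, div_eq_div_iff (dp_ne z) (dp_ne z)] <;> ring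

lemma pdxW : pdx W = fun z => e3 (Wax z) (Wbx z) (Wcx z) := by
  funext z
  simp only [pdx]
  rw [W_eq, (hWv z).fderiv]
  exact FD3_one _ _

lemma pdyW : pdy W = fun z => e3 (Way z) (Wby z) (Wcy z) := by
  funext z
  simp only [pdy]
  rw [W_eq, (hWv z).fderiv]
  exact FD3_I _ _

lemma norm_Wv (z : ℂ) : ‖Wv z‖ = 1 := by
  have hd : (1 * z.re ^ 4 * z.im ^ 0 + 2 * z.re ^ 2 * z.im ^ 2 + 1 * z.re ^ 0 * z.im ^ 4 +
      1 * z.re ^ 0 * z.im ^ 0 : ℝ) ≠ 0 := by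
    have := dp_ne z; simpa only [dp] using this
  have h1 : Wa z ^ 2 + Wb z ^ 2 + Wc z ^ 2 = 1 := by
    simp only [Wa, Wb, Wc, dp]
    field_simp
    ring
  rw [EuclideanSpace.norm_eq, Fin.sum_univ_three]
  simp only [Wv, e3_app0, e3_app1, e3_app2, Real.norm_eq_abs, _root_.sq_abs]
  rw [h1, Real.sqrt_one]


def iv : ℂ → ℝ := fun z => (dp z)⁻¹

lemma hrel (z : ℂ) : (1 * z.re ^ 4 * z.im ^ 0 + 2 * z.re ^ 2 * z.im ^ 2 + 1 * z.re ^ 0 * z.im ^ 4 +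
    1 * z.re ^ 0 * z.im ^ 0 : ℝ) * iv z = 1 := by
  have hd := dp_ne z
  simp only [iv]
  rw [show (1 * z.re ^ 4 * z.im ^ 0 + 2 * z.re ^ 2 * z.im ^ 2 + 1 * z.re ^ 0 * z.im ^ 4 +
    1 * z.re ^ 0 * z.im ^ 0 : ℝ) = dp z from by simp only [dp]]
  field_simp

lemma Wa_eq (z : ℂ) : Wa z = (2 * z.re ^ 2 * z.im ^ 0 + (-2) * z.re ^ 0 * z.im ^ 2) * iv z := by simp only [Wa, iv, div_eq_mul_inv]
lemma Wb_eq (z : ℂ) : Wb z = (4 * z.re ^ 1 * z.im ^ 1) * iv z := by simp only [Wb, iv, div_eq_mul_inv]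
lemma Wc_eq (z : ℂ) : Wc z = (1 * z.re ^ 4 * z.im ^ 0 + 2 * z.re ^ 2 * z.im ^ 2 + 1 * z.re ^ 0 * z.im ^ 4 + (-1) * z.re ^ 0 * z.im ^ 0) * iv z := by simp only [Wc, iv, div_eq_mul_inv]
lemma Wax_eq (z : ℂ) : Wax z = ((-4) * z.re ^ 5 * z.im ^ 0 + 8 * z.re ^ 3 * z.im ^ 2 + 12 * z.re ^ 1 * z.im ^ 4 + 4 * z.re ^ 1 * z.im ^ 0) * iv z ^ 2 := by simp only [Wax, iv, div_eq_mul_inv, inv_pow]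
lemma Way_eq (z : ℂ) : Way z = ((-12) * z.re ^ 4 * z.im ^ 1 + (-8) * z.re ^ 2 * z.im ^ 3 + 4 * z.re ^ 0 * z.im ^ 5 + (-4) * z.re ^ 0 * z.im ^ 1) * iv z ^ 2 := by simp only [Way, iv, div_eq_mul_inv, inv_pow]
lemma Wbx_eq (z : ℂ) : Wbx z = ((-12) * z.re ^ 4 * z.im ^ 1 + (-8) * z.re ^ 2 * z.im ^ 3 + 4 * z.re ^ 0 * z.im ^ 5 + 4 * z.re ^ 0 * z.im ^ 1) * iv z ^ 2 := by simp only [Wbx, iv, div_eq_mul_inv, inv_pow]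
lemma Wby_eq (z : ℂ) : Wby z = (4 * z.re ^ 5 * z.im ^ 0 + (-8) * z.re ^ 3 * z.im ^ 2 + (-12) * z.re ^ 1 * z.im ^ 4 + 4 * z.re ^ 1 * z.im ^ 0) * iv z ^ 2 := by simp only [Wby, iv, div_eq_mul_inv, inv_pow]
lemma Wcx_eq (z : ℂ) : Wcx z = (8 * z.re ^ 3 * z.im ^ 0 + 8 * z.re ^ 1 * z.im ^ 2) * iv z ^ 2 := by simp only [Wcx, iv, div_eq_mul_inv, inv_pow]
lemma Wcy_eq (z : ℂ) : Wcy z = (8 * z.re ^ 2 * z.im ^ 1 + 8 * z.re ^ 0 * z.im ^ 3) * iv z ^ 2 := by simp only [Wcy, iv, div_eq_mul_inv, inv_pow]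
lemma Waxx_eq (z : ℂ) : Waxx z = (12 * z.re ^ 8 * z.im ^ 0 + (-48) * z.re ^ 6 * z.im ^ 2 + (-120) * z.re ^ 4 * z.im ^ 4 + (-48) * z.re ^ 2 * z.im ^ 6 + 12 * z.re ^ 0 * z.im ^ 8 + (-48) * z.re ^ 4 * z.im ^ 0 + 16 * z.re ^ 0 * z.im ^ 4 + 4 * z.re ^ 0 * z.im ^ 0) * iv z ^ 3 := by simp only [Waxx, iv, div_eq_mul_inv, inv_pow]
lemma Waxy_eq (z : ℂ) : Waxy z = (48 * z.re ^ 7 * z.im ^ 1 + 48 * z.re ^ 5 * z.im ^ 3 + (-48) * z.re ^ 3 * z.im ^ 5 + (-48) * z.re ^ 1 * z.im ^ 7 + (-16) * z.re ^ 3 * z.im ^ 1 + 16 * z.re ^ 1 * z.im ^ 3) * iv z ^ 3 := by simp only [Waxy, iv, div_eq_mul_inv, inv_pow]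
lemma Wayy_eq (z : ℂ) : Wayy z = ((-12) * z.re ^ 8 * z.im ^ 0 + 48 * z.re ^ 6 * z.im ^ 2 + 120 * z.re ^ 4 * z.im ^ 4 + 48 * z.re ^ 2 * z.im ^ 6 + (-12) * z.re ^ 0 * z.im ^ 8 + (-16) * z.re ^ 4 * z.im ^ 0 + 48 * z.re ^ 0 * z.im ^ 4 + (-4) * z.re ^ 0 * z.im ^ 0) * iv z ^ 3 := by simp only [Wayy, iv, div_eq_mul_inv, inv_pow]
lemma Wbxx_eq (z : ℂ) : Wbxx z = (48 * z.re ^ 7 * z.im ^ 1 + 48 * z.re ^ 5 * z.im ^ 3 + (-48) * z.re ^ 3 * z.im ^ 5 + (-48) * z.re ^ 1 * z.im ^ 7 + (-80) * z.re ^ 3 * z.im ^ 1 + (-48) * z.re ^ 1 * z.im ^ 3) * iv z ^ 3 := by simp only [Wbxx, iv, div_eq_mul_inv, inv_pow]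
lemma Wbxy_eq (z : ℂ) : Wbxy z = ((-12) * z.re ^ 8 * z.im ^ 0 + 48 * z.re ^ 6 * z.im ^ 2 + 120 * z.re ^ 4 * z.im ^ 4 + 48 * z.re ^ 2 * z.im ^ 6 + (-12) * z.re ^ 0 * z.im ^ 8 + (-8) * z.re ^ 4 * z.im ^ 0 + (-48) * z.re ^ 2 * z.im ^ 2 + (-8) * z.re ^ 0 * z.im ^ 4 + 4 * z.re ^ 0 * z.im ^ 0) * iv z ^ 3 := by simp only [Wbxy, iv, div_eq_mul_inv, inv_pow]
lemma Wbyy_eq (z : ℂ) : Wbyy z = ((-48) * z.re ^ 7 * z.im ^ 1 + (-48) * z.re ^ 5 * z.im ^ 3 + 48 * z.re ^ 3 * z.im ^ 5 + 48 * z.re ^ 1 * z.im ^ 7 + (-48) * z.re ^ 3 * z.im ^ 1 + (-80) * z.re ^ 1 * z.im ^ 3) * iv z ^ 3 := by simp only [Wbyy, iv, div_eq_mul_inv, inv_pow]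
lemma Wcxx_eq (z : ℂ) : Wcxx z = ((-40) * z.re ^ 6 * z.im ^ 0 + (-72) * z.re ^ 4 * z.im ^ 2 + (-24) * z.re ^ 2 * z.im ^ 4 + 8 * z.re ^ 0 * z.im ^ 6 + 24 * z.re ^ 2 * z.im ^ 0 + 8 * z.re ^ 0 * z.im ^ 2) * iv z ^ 3 := by simp only [Wcxx, iv, div_eq_mul_inv, inv_pow]
lemma Wcxy_eq (z : ℂ) : Wcxy z = ((-48) * z.re ^ 5 * z.im ^ 1 + (-96) * z.re ^ 3 * z.im ^ 3 + (-48) * z.re ^ 1 * z.im ^ 5 + 16 * z.re ^ 1 * z.im ^ 1) * iv z ^ 3 := by simp only [Wcxy, iv, div_eq_mul_inv, inv_pow]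
lemma Wcyy_eq (z : ℂ) : Wcyy z = (8 * z.re ^ 6 * z.im ^ 0 + (-24) * z.re ^ 4 * z.im ^ 2 + (-72) * z.re ^ 2 * z.im ^ 4 + (-40) * z.re ^ 0 * z.im ^ 6 + 8 * z.re ^ 2 * z.im ^ 0 + 24 * z.re ^ 0 * z.im ^ 2) * iv z ^ 3 := by simp only [Wcyy, iv, div_eq_mul_inv, inv_pow]

lemma K1_eq : K1 = fun z => Wc z • Wv z := by
  funext z
  have hdd : ((z.re ^ 2 + z.im ^ 2) ^ 2 + 1 : ℝ) = dp z := by simp only [dp]; ring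
  refine R3_ext ?_ ?_ ?_ <;>
    simp only [K1, Wv, Wa, Wb, Wc, q2, q3, e3_app0, e3_app1, e3_app2, R3_smul_apply,
      smul_eq_mul] <;>
    rw [hdd] <;> field_simp [dp_ne z] <;> try ring

lemma pdxK1 : pdx K1 = fun z => Wcx z • Wv z + Wc z • e3 (Wax z) (Wbx z) (Wcx z) := by
  funext z
  simp only [pdx]
  rw [K1_eq, (fd3_smul (hWc z) (hWv z)).fderiv]
  exact FD3_one _ _

lemma pdyK1 : pdy K1 = fun z => Wcy z • Wv z + Wc z • e3 (Way z) (Wby z) (Wcy z) := by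
  funext z
  simp only [pdy]
  rw [K1_eq, (fd3_smul (hWc z) (hWv z)).fderiv]
  exact FD3_I _ _

lemma kerK1 (z : ℂ) : LW K1 z = 0 := by
  have hd : (1 * z.re ^ 4 * z.im ^ 0 + 2 * z.re ^ 2 * z.im ^ 2 + 1 * z.re ^ 0 * z.im ^ 4 +
      1 * z.re ^ 0 * z.im ^ 0 : ℝ) ≠ 0 := by
    have := dp_ne z; simpa only [dp] using this
  have hx : HasFDerivAt (fun z => Wcx z • Wv z + Wc z • e3 (Wax z) (Wbx z) (Wcx z))
      (FD3 ((Wcxx z • Wv z + Wcx z • e3 (Wax z) (Wbx z) (Wcx z)) + (Wcx z • e3 (Wax z) (Wbx z) (Wcx z) + Wc z • e3 (Waxx z) (Wbxx z) (Wcxx z)))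
           ((Wcxy z • Wv z + Wcx z • e3 (Way z) (Wby z) (Wcy z)) + (Wcy z • e3 (Wax z) (Wbx z) (Wcx z) + Wc z • e3 (Waxy z) (Wbxy z) (Wcxy z)))) z :=
    fd3_add (fd3_smul (hWcx z) (hWv z)) (fd3_smul (hWc z) (fd3_e3 (hWax z) (hWbx z) (hWcx z)))
  have hy : HasFDerivAt (fun z => Wcy z • Wv z + Wc z • e3 (Way z) (Wby z) (Wcy z))
      (FD3 ((Wcxy z • Wv z + Wcy z • e3 (Wax z) (Wbx z) (Wcx z)) + (Wcx z • e3 (Way z) (Wby z) (Wcy z) + Wc z • e3 (Waxy z) (Wbxy z) (Wcxy z)))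
           ((Wcyy z • Wv z + Wcy z • e3 (Way z) (Wby z) (Wcy z)) + (Wcy z • e3 (Way z) (Wby z) (Wcy z) + Wc z • e3 (Wayy z) (Wbyy z) (Wcyy z)))) z :=
    fd3_add (fd3_smul (hWcy z) (hWv z)) (fd3_smul (hWc z) (fd3_e3 (hWay z) (hWby z) (hWcy z)))
  rw [LW, lap, pdxK1, pdyK1, pdxW, pdyW]
  simp only [pdx, pdy]
  rw [hx.fderiv, hy.fderiv]
  simp only [FD3_one, FD3_I]
  refine R3_ext ?_ ?_ ?_
  · simp only [cross, Wv, e3_app0, e3_app1, e3_app2, R3_add_apply, R3_smul_apply,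
      R3_sub_apply, R3_zero_apply, q2, q2x, q2y, q2xx, q2xy, q2yy, q3, q3x, q3y, q3xx,
      q3xy, q3yy, Wa_eq, Wb_eq, Wc_eq, Wax_eq, Way_eq, Wbx_eq, Wby_eq, Wcx_eq, Wcy_eq, Waxx_eq, Waxy_eq, Wayy_eq, Wbxx_eq, Wbxy_eq, Wbyy_eq, Wcxx_eq, Wcxy_eq, Wcyy_eq]
    linear_combination (192 * z.re ^ 0 * z.im ^ 4 * iv z ^ 4 + (-192) * z.re ^ 0 * z.im ^ 8 * iv z ^ 4 + (-384) * z.re ^ 2 * z.im ^ 6 * iv z ^ 4 + (-192) * z.re ^ 4 * z.im ^ 0 * iv z ^ 4 + 384 * z.re ^ 6 * z.im ^ 2 * iv z ^ 4 + 192 * z.re ^ 8 * z.im ^ 0 * iv z ^ 4) * hrel z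
  · simp only [cross, Wv, e3_app0, e3_app1, e3_app2, R3_add_apply, R3_smul_apply,
      R3_sub_apply, R3_zero_apply, q2, q2x, q2y, q2xx, q2xy, q2yy, q3, q3x, q3y, q3xx,
      q3xy, q3yy, Wa_eq, Wb_eq, Wc_eq, Wax_eq, Way_eq, Wbx_eq, Wby_eq, Wcx_eq, Wcy_eq, Waxx_eq, Waxy_eq, Wayy_eq, Wbxx_eq, Wbxy_eq, Wbyy_eq, Wcxx_eq, Wcxy_eq, Wcyy_eq]
    linear_combination ((-384) * z.re ^ 1 * z.im ^ 3 * iv z ^ 4 + 384 * z.re ^ 1 * z.im ^ 7 * iv z ^ 4 + (-384) * z.re ^ 3 * z.im ^ 1 * iv z ^ 4 + 1152 * z.re ^ 3 * z.im ^ 5 * iv z ^ 4 + 1152 * z.re ^ 5 * z.im ^ 3 * iv z ^ 4 + 384 * z.re ^ 7 * z.im ^ 1 * iv z ^ 4) * hrel z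
  · simp only [cross, Wv, e3_app0, e3_app1, e3_app2, R3_add_apply, R3_smul_apply,
      R3_sub_apply, R3_zero_apply, q2, q2x, q2y, q2xx, q2xy, q2yy, q3, q3x, q3y, q3xx,
      q3xy, q3yy, Wa_eq, Wb_eq, Wc_eq, Wax_eq, Way_eq, Wbx_eq, Wby_eq, Wcx_eq, Wcy_eq, Waxx_eq, Waxy_eq, Wayy_eq, Wbxx_eq, Wbxy_eq, Wbyy_eq, Wcxx_eq, Wcxy_eq, Wcyy_eq]
    linear_combination (64 * z.re ^ 0 * z.im ^ 2 * iv z ^ 4 + (-256) * z.re ^ 0 * z.im ^ 6 * iv z ^ 4 + 64 * z.re ^ 0 * z.im ^ 10 * iv z ^ 4 + 64 * z.re ^ 2 * z.im ^ 0 * iv z ^ 4 + (-768) * z.re ^ 2 * z.im ^ 4 * iv z ^ 4 + 320 * z.re ^ 2 * z.im ^ 8 * iv z ^ 4 + (-768) * z.re ^ 4 * z.im ^ 2 * iv z ^ 4 + 640 * z.re ^ 4 * z.im ^ 6 * iv z ^ 4 + (-256) * z.re ^ 6 * z.im ^ 0 * iv z ^ 4 + 640 * z.re ^ 6 * z.im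 ^ 4 * iv z ^ 4 + 320 * z.re ^ 8 * z.im ^ 2 * iv z ^ 4 + 64 * z.re ^ 10 * z.im ^ 0 * iv z ^ 4) * hrel z

lemma absK1 (z : ℂ) : |Wc z| ≤ 1 := by
  have h := dp_pos z
  simp only [Wc]
  rw [abs_div, abs_of_pos h, div_le_one h, abs_le]
  constructor <;> simp only [dp] <;> nlinarith [sq_nonneg z.re, sq_nonneg z.im, sq_nonneg (z.re*z.im), sq_nonneg (z.re^2+z.im^2), sq_nonneg (z.re^2-z.im^2), sq_nonneg (z.re^2+z.im^2-1), sq_nonneg (z.re-z.im), sq_nonneg (z.re+z.im), sq_nonneg (z.re*z.im-1), sq_nonneg (z.re*z.im+1), sq_nonneg (z.re^2+z.im^2+1)]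

lemma bndK1 (z : ℂ) : ‖K1 z‖ ≤ 1 := by
  rw [K1_eq]
  show ‖Wc z • Wv z‖ ≤ 1
  rw [norm_smul, norm_Wv, mul_one, Real.norm_eq_abs]
  exact absK1 z


lemma K2_eq : K2 = fun z => q2 z • Wv z := by
  funext z
  have hdd : ((z.re ^ 2 + z.im ^ 2) ^ 2 + 1 : ℝ) = dp z := by simp only [dp]; ring
  refine R3_ext ?_ ?_ ?_ <;>
    simp only [K2, Wv, Wa, Wb, Wc, q2, q3, e3_app0, e3_app1, e3_app2, R3_smul_apply,
      smul_eq_mul] <;>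
    rw [hdd] <;> field_simp [dp_ne z] <;> try ring

lemma pdxK2 : pdx K2 = fun z => q2x z • Wv z + q2 z • e3 (Wax z) (Wbx z) (Wcx z) := by
  funext z
  simp only [pdx]
  rw [K2_eq, (fd3_smul (hq2 z) (hWv z)).fderiv]
  exact FD3_one _ _

lemma pdyK2 : pdy K2 = fun z => q2y z • Wv z + q2 z • e3 (Way z) (Wby z) (Wcy z) := by
  funext z
  simp only [pdy]
  rw [K2_eq, (fd3_smul (hq2 z) (hWv z)).fderiv]
  exact FD3_I _ _

lemma kerK2 (z : ℂ) : LW K2 z = 0 := by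
  have hd : (1 * z.re ^ 4 * z.im ^ 0 + 2 * z.re ^ 2 * z.im ^ 2 + 1 * z.re ^ 0 * z.im ^ 4 +
      1 * z.re ^ 0 * z.im ^ 0 : ℝ) ≠ 0 := by
    have := dp_ne z; simpa only [dp] using this
  have hx : HasFDerivAt (fun z => q2x z • Wv z + q2 z • e3 (Wax z) (Wbx z) (Wcx z))
      (FD3 ((q2xx z • Wv z + q2x z • e3 (Wax z) (Wbx z) (Wcx z)) + (q2x z • e3 (Wax z) (Wbx z) (Wcx z) + q2 z • e3 (Waxx z) (Wbxx z) (Wcxx z)))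
           ((q2xy z • Wv z + q2x z • e3 (Way z) (Wby z) (Wcy z)) + (q2y z • e3 (Wax z) (Wbx z) (Wcx z) + q2 z • e3 (Waxy z) (Wbxy z) (Wcxy z)))) z :=
    fd3_add (fd3_smul (hq2x z) (hWv z)) (fd3_smul (hq2 z) (fd3_e3 (hWax z) (hWbx z) (hWcx z)))
  have hy : HasFDerivAt (fun z => q2y z • Wv z + q2 z • e3 (Way z) (Wby z) (Wcy z))
      (FD3 ((q2xy z • Wv z + q2y z • e3 (Wax z) (Wbx z) (Wcx z)) + (q2x z • e3 (Way z) (Wby z) (Wcy z) + q2 z • e3 (Waxy z) (Wbxy z) (Wcxy z)))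
           ((q2yy z • Wv z + q2y z • e3 (Way z) (Wby z) (Wcy z)) + (q2y z • e3 (Way z) (Wby z) (Wcy z) + q2 z • e3 (Wayy z) (Wbyy z) (Wcyy z)))) z :=
    fd3_add (fd3_smul (hq2y z) (hWv z)) (fd3_smul (hq2 z) (fd3_e3 (hWay z) (hWby z) (hWcy z)))
  rw [LW, lap, pdxK2, pdyK2, pdxW, pdyW]
  simp only [pdx, pdy]
  rw [hx.fderiv, hy.fderiv]
  simp only [FD3_one, FD3_I]
  refine R3_ext ?_ ?_ ?_
  · simp only [cross, Wv, e3_app0, e3_app1, e3_app2, R3_add_apply, R3_smul_apply,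
      R3_sub_apply, R3_zero_apply, q2, q2x, q2y, q2xx, q2xy, q2yy, q3, q3x, q3y, q3xx,
      q3xy, q3yy, Wa_eq, Wb_eq, Wc_eq, Wax_eq, Way_eq, Wbx_eq, Wby_eq, Wcx_eq, Wcy_eq, Waxx_eq, Waxy_eq, Wayy_eq, Wbxx_eq, Wbxy_eq, Wbyy_eq, Wcxx_eq, Wcxy_eq, Wcyy_eq]
    linear_combination ((-16) * z.re ^ 0 * z.im ^ 2 * iv z ^ 4 + 160 * z.re ^ 0 * z.im ^ 6 * iv z ^ 4 + (-16) * z.re ^ 0 * z.im ^ 10 * iv z ^ 4 + (-16) * z.re ^ 2 * z.im ^ 0 * iv z ^ 4 + (-288) * z.re ^ 2 * z.im ^ 4 * iv z ^ 4 + (-80) * z.re ^ 2 * z.im ^ 8 * iv z ^ 4 + (-288) * z.re ^ 4 * z.im ^ 2 * iv z ^ 4 + (-160) * z.re ^ 4 * z.im ^ 6 * iv z ^ 4 + 160 * z.re ^ 6 * z.im ^ 0 * iv z ^ 4 + (-160) * z.re ^ 6 * z.im ^ 4 * iv z ^ 4 + (-80) * z.re ^ 8 * z.im ^ 2 * iv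 z ^ 4 + (-16) * z.re ^ 10 * z.im ^ 0 * iv z ^ 4) * hrel z
  · simp only [cross, Wv, e3_app0, e3_app1, e3_app2, R3_add_apply, R3_smul_apply,
      R3_sub_apply, R3_zero_apply, q2, q2x, q2y, q2xx, q2xy, q2yy, q3, q3x, q3y, q3xx,
      q3xy, q3yy, Wa_eq, Wb_eq, Wc_eq, Wax_eq, Way_eq, Wbx_eq, Wby_eq, Wcx_eq, Wcy_eq, Waxx_eq, Waxy_eq, Wayy_eq, Wbxx_eq, Wbxy_eq, Wbyy_eq, Wcxx_eq, Wcxy_eq, Wcyy_eq]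
    linear_combination ((-384) * z.re ^ 1 * z.im ^ 5 * iv z ^ 4 + 384 * z.re ^ 5 * z.im ^ 1 * iv z ^ 4) * hrel z
  · simp only [cross, Wv, e3_app0, e3_app1, e3_app2, R3_add_apply, R3_smul_apply,
      R3_sub_apply, R3_zero_apply, q2, q2x, q2y, q2xx, q2xy, q2yy, q3, q3x, q3y, q3xx,
      q3xy, q3yy, Wa_eq, Wb_eq, Wc_eq, Wax_eq, Way_eq, Wbx_eq, Wby_eq, Wcx_eq, Wcy_eq, Waxx_eq, Waxy_eq, Wayy_eq, Wbxx_eq, Wbxy_eq, Wbyy_eq, Wcxx_eq, Wcxy_eq, Wcyy_eq]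
    linear_combination (96 * z.re ^ 0 * z.im ^ 4 * iv z ^ 4 + (-96) * z.re ^ 0 * z.im ^ 8 * iv z ^ 4 + (-192) * z.re ^ 2 * z.im ^ 6 * iv z ^ 4 + (-96) * z.re ^ 4 * z.im ^ 0 * iv z ^ 4 + 192 * z.re ^ 6 * z.im ^ 2 * iv z ^ 4 + 96 * z.re ^ 8 * z.im ^ 0 * iv z ^ 4) * hrel z

lemma absK2 (z : ℂ) : |q2 z| ≤ 1 := by
  have h := dp_pos z
  simp only [q2, Wa]; rw [← mul_div_assoc]
  rw [abs_div, abs_of_pos h, div_le_one h, abs_le]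
  constructor <;> simp only [dp] <;> nlinarith [sq_nonneg z.re, sq_nonneg z.im, sq_nonneg (z.re*z.im), sq_nonneg (z.re^2+z.im^2), sq_nonneg (z.re^2-z.im^2), sq_nonneg (z.re^2+z.im^2-1), sq_nonneg (z.re-z.im), sq_nonneg (z.re+z.im), sq_nonneg (z.re*z.im-1), sq_nonneg (z.re*z.im+1), sq_nonneg (z.re^2+z.im^2+1)]

lemma bndK2 (z : ℂ) : ‖K2 z‖ ≤ 1 := by
  rw [K2_eq]
  show ‖q2 z • Wv z‖ ≤ 1
  rw [norm_smul, norm_Wv, mul_one, Real.norm_eq_abs]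
  exact absK2 z


lemma K3_eq : K3 = fun z => q3 z • Wv z := by
  funext z
  have hdd : ((z.re ^ 2 + z.im ^ 2) ^ 2 + 1 : ℝ) = dp z := by simp only [dp]; ring
  refine R3_ext ?_ ?_ ?_ <;>
    simp only [K3, Wv, Wa, Wb, Wc, q2, q3, e3_app0, e3_app1, e3_app2, R3_smul_apply,
      smul_eq_mul] <;>
    rw [hdd] <;> field_simp [dp_ne z] <;> try ring

lemma pdxK3 : pdx K3 = fun z => q3x z • Wv z + q3 z • e3 (Wax z) (Wbx z) (Wcx z) := by
  funext z
  simp only [pdx]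
  rw [K3_eq, (fd3_smul (hq3 z) (hWv z)).fderiv]
  exact FD3_one _ _

lemma pdyK3 : pdy K3 = fun z => q3y z • Wv z + q3 z • e3 (Way z) (Wby z) (Wcy z) := by
  funext z
  simp only [pdy]
  rw [K3_eq, (fd3_smul (hq3 z) (hWv z)).fderiv]
  exact FD3_I _ _

lemma kerK3 (z : ℂ) : LW K3 z = 0 := by
  have hd : (1 * z.re ^ 4 * z.im ^ 0 + 2 * z.re ^ 2 * z.im ^ 2 + 1 * z.re ^ 0 * z.im ^ 4 +
      1 * z.re ^ 0 * z.im ^ 0 : ℝ) ≠ 0 := by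
    have := dp_ne z; simpa only [dp] using this
  have hx : HasFDerivAt (fun z => q3x z • Wv z + q3 z • e3 (Wax z) (Wbx z) (Wcx z))
      (FD3 ((q3xx z • Wv z + q3x z • e3 (Wax z) (Wbx z) (Wcx z)) + (q3x z • e3 (Wax z) (Wbx z) (Wcx z) + q3 z • e3 (Waxx z) (Wbxx z) (Wcxx z)))
           ((q3xy z • Wv z + q3x z • e3 (Way z) (Wby z) (Wcy z)) + (q3y z • e3 (Wax z) (Wbx z) (Wcx z) + q3 z • e3 (Waxy z) (Wbxy z) (Wcxy z)))) z :=
    fd3_add (fd3_smul (hq3x z) (hWv z)) (fd3_smul (hq3 z) (fd3_e3 (hWax z) (hWbx z) (hWcx z)))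
  have hy : HasFDerivAt (fun z => q3y z • Wv z + q3 z • e3 (Way z) (Wby z) (Wcy z))
      (FD3 ((q3xy z • Wv z + q3y z • e3 (Wax z) (Wbx z) (Wcx z)) + (q3x z • e3 (Way z) (Wby z) (Wcy z) + q3 z • e3 (Waxy z) (Wbxy z) (Wcxy z)))
           ((q3yy z • Wv z + q3y z • e3 (Way z) (Wby z) (Wcy z)) + (q3y z • e3 (Way z) (Wby z) (Wcy z) + q3 z • e3 (Wayy z) (Wbyy z) (Wcyy z)))) z :=
    fd3_add (fd3_smul (hq3y z) (hWv z)) (fd3_smul (hq3 z) (fd3_e3 (hWay z) (hWby z) (hWcy z)))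
  rw [LW, lap, pdxK3, pdyK3, pdxW, pdyW]
  simp only [pdx, pdy]
  rw [hx.fderiv, hy.fderiv]
  simp only [FD3_one, FD3_I]
  refine R3_ext ?_ ?_ ?_
  · simp only [cross, Wv, e3_app0, e3_app1, e3_app2, R3_add_apply, R3_smul_apply,
      R3_sub_apply, R3_zero_apply, q2, q2x, q2y, q2xx, q2xy, q2yy, q3, q3x, q3y, q3xx,
      q3xy, q3yy, Wa_eq, Wb_eq, Wc_eq, Wax_eq, Way_eq, Wbx_eq, Wby_eq, Wcx_eq, Wcy_eq, Waxx_eq, Waxy_eq, Wayy_eq, Wbxx_eq, Wbxy_eq, Wbyy_eq, Wcxx_eq, Wcxy_eq, Wcyy_eq]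
    linear_combination ((-384) * z.re ^ 1 * z.im ^ 5 * iv z ^ 4 + 384 * z.re ^ 5 * z.im ^ 1 * iv z ^ 4) * hrel z
  · simp only [cross, Wv, e3_app0, e3_app1, e3_app2, R3_add_apply, R3_smul_apply,
      R3_sub_apply, R3_zero_apply, q2, q2x, q2y, q2xx, q2xy, q2yy, q3, q3x, q3y, q3xx,
      q3xy, q3yy, Wa_eq, Wb_eq, Wc_eq, Wax_eq, Way_eq, Wbx_eq, Wby_eq, Wcx_eq, Wcy_eq, Waxx_eq, Waxy_eq, Wayy_eq, Wbxx_eq, Wbxy_eq, Wbyy_eq, Wcxx_eq, Wcxy_eq, Wcyy_eq]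
    linear_combination ((-16) * z.re ^ 0 * z.im ^ 2 * iv z ^ 4 + (-32) * z.re ^ 0 * z.im ^ 6 * iv z ^ 4 + (-16) * z.re ^ 0 * z.im ^ 10 * iv z ^ 4 + (-16) * z.re ^ 2 * z.im ^ 0 * iv z ^ 4 + 672 * z.re ^ 2 * z.im ^ 4 * iv z ^ 4 + (-80) * z.re ^ 2 * z.im ^ 8 * iv z ^ 4 + 672 * z.re ^ 4 * z.im ^ 2 * iv z ^ 4 + (-160) * z.re ^ 4 * z.im ^ 6 * iv z ^ 4 + (-32) * z.re ^ 6 * z.im ^ 0 * iv z ^ 4 + (-160) * z.re ^ 6 * z.im ^ 4 * iv z ^ 4 + (-80) * z.re ^ 8 * z.im ^ 2 * iv z ^ 4 + (-16) * z.re ^ 10 * z.im ^ 0 * iv z ^ 4) * hrel z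
  · simp only [cross, Wv, e3_app0, e3_app1, e3_app2, R3_add_apply, R3_smul_apply,
      R3_sub_apply, R3_zero_apply, q2, q2x, q2y, q2xx, q2xy, q2yy, q3, q3x, q3y, q3xx,
      q3xy, q3yy, Wa_eq, Wb_eq, Wc_eq, Wax_eq, Way_eq, Wbx_eq, Wby_eq, Wcx_eq, Wcy_eq, Waxx_eq, Waxy_eq, Wayy_eq, Wbxx_eq, Wbxy_eq, Wbyy_eq, Wcxx_eq, Wcxy_eq, Wcyy_eq]
    linear_combination ((-192) * z.re ^ 1 * z.im ^ 3 * iv z ^ 4 + 192 * z.re ^ 1 * z.im ^ 7 * iv z ^ 4 + (-192) * z.re ^ 3 * z.im ^ 1 * iv z ^ 4 + 576 * z.re ^ 3 * z.im ^ 5 * iv z ^ 4 + 576 * z.re ^ 5 * z.im ^ 3 * iv z ^ 4 + 192 * z.re ^ 7 * z.im ^ 1 * iv z ^ 4) * hrel z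

lemma absK3 (z : ℂ) : |q3 z| ≤ 1 := by
  have h := dp_pos z
  simp only [q3, Wb]; rw [← mul_div_assoc]
  rw [abs_div, abs_of_pos h, div_le_one h, abs_le]
  constructor <;> simp only [dp] <;> nlinarith [sq_nonneg z.re, sq_nonneg z.im, sq_nonneg (z.re*z.im), sq_nonneg (z.re^2+z.im^2), sq_nonneg (z.re^2-z.im^2), sq_nonneg (z.re^2+z.im^2-1), sq_nonneg (z.re-z.im), sq_nonneg (z.re+z.im), sq_nonneg (z.re*z.im-1), sq_nonneg (z.re*z.im+1), sq_nonneg (z.re^2+z.im^2+1)]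

lemma bndK3 (z : ℂ) : ‖K3 z‖ ≤ 1 := by
  rw [K3_eq]
  show ‖q3 z • Wv z‖ ≤ 1
  rw [norm_smul, norm_Wv, mul_one, Real.norm_eq_abs]
  exact absK3 z


lemma cd_re : ContDiff ℝ (⊤ : ℕ∞) (fun z : ℂ => z.re) := Complex.reCLM.contDiff
lemma cd_im : ContDiff ℝ (⊤ : ℕ∞) (fun z : ℂ => z.im) := Complex.imCLM.contDiff

lemma cd_dp : ContDiff ℝ (⊤ : ℕ∞) dp := (((((contDiff_const.mul (cd_re.pow 4)).mul (cd_im.pow 0)).add ((contDiff_const.mul (cd_re.pow 2)).mul (cd_im.pow 2))).add ((contDiff_const.mul (cd_re.pow 0)).mul (cd_im.pow 4))).add ((contDiff_const.mul (cd_re.pow 0)).mul (cd_im.pow 0)))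
lemma cd_Wa : ContDiff ℝ (⊤ : ℕ∞) Wa := ContDiff.div (((contDiff_const.mul (cd_re.pow 2)).mul (cd_im.pow 0)).add ((contDiff_const.mul (cd_re.pow 0)).mul (cd_im.pow 2))) cd_dp dp_ne
lemma cd_Wb : ContDiff ℝ (⊤ : ℕ∞) Wb := ContDiff.div ((contDiff_const.mul (cd_re.pow 1)).mul (cd_im.pow 1)) cd_dp dp_ne
lemma cd_Wc : ContDiff ℝ (⊤ : ℕ∞) Wc := ContDiff.div (((((contDiff_const.mul (cd_re.pow 4)).mul (cd_im.pow 0)).add ((contDiff_const.mul (cd_re.pow 2)).mul (cd_im.pow 2))).add ((contDiff_const.mul (cd_re.pow 0)).mul (cd_im.pow 4))).add ((contDiff_const.mul (cd_re.pow 0)).mul (cd_im.pow 0))) cd_dp dp_ne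

lemma cd_Wv : ContDiff ℝ (⊤ : ℕ∞) Wv := by
  have h : Wv = fun z => Wa z • e3 1 0 0 + Wb z • e3 0 1 0 + Wc z • e3 0 0 1 :=
    funext fun z => e3_decomp _ _ _
  rw [h]
  exact ((cd_Wa.smul contDiff_const).add (cd_Wb.smul contDiff_const)).add
    (cd_Wc.smul contDiff_const)

lemma smoothK1 : ContDiff ℝ (⊤ : ℕ∞) K1 := by
  rw [K1_eq]; exact cd_Wc.smul cd_Wv
lemma smoothK2 : ContDiff ℝ (⊤ : ℕ∞) K2 := by
  rw [K2_eq]; exact (contDiff_const.mul cd_Wa).smul cd_Wv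
lemma smoothK3 : ContDiff ℝ (⊤ : ℕ∞) K3 := by
  rw [K3_eq]; exact (contDiff_const.mul cd_Wb).smul cd_Wv


/-- Each of the three maps `K₁, K₂, K₃` is a bounded smooth solution of the linearized
H-system `L_W[K] = 0` at the degree-2 bubble `W`. -/
theorem K_kernels_bounded_smooth :
    IsBoundedSmoothKernel K1 ∧ IsBoundedSmoothKernel K2 ∧ IsBoundedSmoothKernel K3 := by
  exact ⟨⟨⟨1, bndK1⟩, smoothK1, kerK1⟩, ⟨⟨1, bndK2⟩, smoothK2, kerK2⟩,
    ⟨⟨1, bndK3⟩, smoothK3, kerK3⟩⟩
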